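/- Let a_n be the number of Dyck paths of semilength n with no up-run of length 3 or more. Then a_0 = 1, a_1 = 1, and for every n ≥ 2, a_n = a_{n−1} + Σ_{k=0}^{n−2} a_k · a_{n−2−k} (equivalently, the generating function P of these paths satisfies P = 1 + z·P + z^2·P^2 as formal power series). -/

import Mathlib

/-- The height of a path (list of up/down steps, `true` = up = +1, `false` = down = −1)
after its first `k` steps. -/
def heightAt (p : List Bool) (k : ℕ) : ℤ :=
  ((p.take k).count true : ℤ) - ((p.take k).count false : ℤ)

/-- A Dyck path: all partial sums nonnegative and total sum zero. -/
def IsDyck (p : List Bool) : Prop :=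
  (∀ k, 0 ≤ heightAt p k) ∧ heightAt p p.length = 0

/-- A peak at height `h`: an up-step immediately followed by a down-step,
the height after the up-step being `h`. -/
def HasPeakAt (p : List Bool) (h : ℤ) : Prop :=
  ∃ i, p[i]? = some true ∧ p[i+1]? = some false ∧ heightAt p (i+1) = h

/-- A valley at height `h`: a down-step immediately followed by an up-step,
the height after the down-step being `h`. -/
def HasValleyAt (p : List Bool) (h : ℤ) : Prop :=
  ∃ i, p[i]? = some false ∧ p[i+1]? = some true ∧ heightAt p (i+1) = h

/-- `p` has an up-run of length `m`: a maximal block of exactly `m` consecutive up-steps. -/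
def HasUpRun (p : List Bool) (m : ℕ) : Prop :=
  ∃ i, (∀ j, j < m → p[i+j]? = some true) ∧
    (i = 0 ∨ p[i-1]? = some false) ∧
    (p[i+m]? = some false ∨ i + m = p.length)

/-- `p` has a down-run of length `m`: a maximal block of exactly `m` consecutive down-steps. -/
def HasDownRun (p : List Bool) (m : ℕ) : Prop :=
  ∃ i, (∀ j, j < m → p[i+j]? = some false) ∧
    (i = 0 ∨ p[i-1]? = some true) ∧
    (p[i+m]? = some true ∨ i + m = p.length)

/-- Generating function of the set of Dyck paths satisfying `Q`:
the coefficient of `z^n` is the number of such paths of semilength `n`. -/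
noncomputable def genFun (Q : List Bool → Prop) : PowerSeries ℕ :=
  PowerSeries.mk fun n => Set.ncard {p : List Bool | p.length = 2 * n ∧ IsDyck p ∧ Q p}

namespace St6

def hgt (l : List Bool) : ℤ := (l.count true : ℤ) - (l.count false : ℤ)

lemma heightAt_eq (p : List Bool) (k : ℕ) : heightAt p k = hgt (p.take k) := rfl

lemma hgt_append (x y : List Bool) : hgt (x ++ y) = hgt x + hgt y := by
  simp [hgt, List.count_append]; ring

lemma heightAt_succ (p : List Bool) (k : ℕ) (b : Bool) (h : p[k]? = some b) :
    heightAt p (k+1) = heightAt p k + (if b then 1 else -1) := by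
  rw [heightAt_eq, heightAt_eq, List.take_succ, h, hgt_append]
  cases b <;> simp [hgt]

lemma heightAt_of_le (p : List Bool) (k : ℕ) (h : p.length ≤ k) :
    heightAt p k = heightAt p p.length := by
  rw [heightAt_eq, heightAt_eq, List.take_of_length_le h, List.take_length]

def Avoid (p : List Bool) : Prop :=
  ∀ i, ¬ (p[i]? = some true ∧ p[i+1]? = some true ∧ p[i+2]? = some true)

lemma avoid_iff (p : List Bool) : (∀ m : ℕ, 3 ≤ m → ¬ HasUpRun p m) ↔ Avoid p := by
  classical
  constructor
  · intro h i ⟨h0, h1, h2⟩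
    have hilen : i + 2 < p.length := by
      by_contra hc
      rw [List.getElem?_eq_none (by omega)] at h2; exact absurd h2 (by simp)
    -- least starting point
    have hPex : ∃ j, ∀ k, j ≤ k → k ≤ i + 2 → p[k]? = some true := by
      refine ⟨i, fun k hk1 hk2 => ?_⟩
      rcases (by omega : k = i ∨ k = i+1 ∨ k = i+2) with rfl | rfl | rfl <;> assumption
    set s := Nat.find hPex with hs_def
    have hs : ∀ k, s ≤ k → k ≤ i + 2 → p[k]? = some true := Nat.find_spec hPex
    have hsle : s ≤ i := Nat.find_min' hPex (fun k hk1 hk2 => by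
      rcases (by omega : k = i ∨ k = i+1 ∨ k = i+2) with rfl | rfl | rfl <;> assumption)
    have hleft : s = 0 ∨ p[s-1]? = some false := by
      rcases Nat.eq_zero_or_pos s with h0' | h0'
      · exact Or.inl h0'
      · right
        have hmin := Nat.find_min hPex (show s - 1 < s by omega)
        push_neg at hmin
        obtain ⟨k, hk1, hk2, hk3⟩ := hmin
        have hks : k = s - 1 := by
          by_contra hne
          exact hk3 (hs k (by omega) hk2)
        subst hks
        have hklen : s - 1 < p.length := by omega
        rw [List.getElem?_eq_getElem hklen] at hk3 ⊢
        cases hb : p[s-1] with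
        | true => exact absurd (by rw [hb]) hk3
        | false => rfl
    -- least end point
    have hQex : ∃ d, p[i+3+d]? ≠ some true := by
      exact ⟨p.length, by rw [List.getElem?_eq_none (by omega)]; simp⟩
    set e := Nat.find hQex with he_def
    have he : p[i+3+e]? ≠ some true := Nat.find_spec hQex
    have hemin : ∀ d, d < e → p[i+3+d]? = some true := fun d hd => by
      have := Nat.find_min hQex hd; push_neg at this; exact this
    have hrun : ∀ j, j < i + 3 + e - s → p[s+j]? = some true := by
      intro j hj
      rcases le_or_gt (s + j) (i+2) with hle | hlt
      · exact hs _ (by omega) hle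
      · have : s + j = i + 3 + (s + j - (i+3)) := by omega
        rw [this]; exact hemin _ (by omega)
    have hlast : p[i+2+e]? = some true := by
      rcases Nat.eq_zero_or_pos e with h0e | hpos
      · rw [h0e]; simpa using h2
      · have := hemin (e-1) (by omega)
        have h3 : i + 3 + (e-1) = i + 2 + e := by omega
        rwa [h3] at this
    have hlastlen : i + 2 + e < p.length := by
      by_contra hc
      rw [List.getElem?_eq_none (by omega)] at hlast; exact absurd hlast (by simp)
    have hright : p[s + (i+3+e-s)]? = some false ∨ s + (i+3+e-s) = p.length := by
      have hse : s + (i+3+e-s) = i+3+e := by omega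
      rw [hse]
      rcases lt_or_ge (i+3+e) p.length with hlt | hge
      · left
        rw [List.getElem?_eq_getElem hlt] at he ⊢
        cases hb : p[i+3+e] with
        | true => exact absurd (by rw [hb]) he
        | false => rfl
      · right; omega
    exact h (i+3+e-s) (by omega) ⟨s, hrun, hleft, hright⟩
  · rintro hA m hm ⟨i, hrun, -, -⟩
    refine hA i ⟨?_, ?_, ?_⟩
    · have := hrun 0 (by omega); simpa using this
    · exact hrun 1 (by omega)
    · exact hrun 2 (by omega)


lemma heightAt_zero (p : List Bool) : heightAt p 0 = 0 := by
  simp [heightAt]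

lemma cons3_get (a b c : Bool) (q : List Bool) (i : ℕ) : (a::b::c::q)[i+3]? = q[i]? := by
  simp [List.getElem?_cons]

lemma q_get_left (t r : List Bool) (j : ℕ) (h : j < t.length) :
    (t ++ false :: r)[j]? = t[j]? := List.getElem?_append_left h

lemma q_get_mid (t r : List Bool) : (t ++ false :: r)[t.length]? = some false := by
  rw [List.getElem?_append_right le_rfl]; simp

lemma q_get_right (t r : List Bool) (j : ℕ) : (t ++ false :: r)[t.length+1+j]? = r[j]? := by
  rw [List.getElem?_append_right (by omega)]
  have : t.length + 1 + j - t.length = j + 1 := by omega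
  rw [this, List.getElem?_cons_succ]

lemma avoid_cons_cons (r : List Bool) : Avoid (true :: false :: r) ↔ Avoid r := by
  constructor
  · intro h i hi
    refine h (i+2) ⟨?_, ?_, ?_⟩
    · simpa [List.getElem?_cons] using hi.1
    · have : i + 2 + 1 = (i+1) + 2 := by omega
      rw [this]; simpa [List.getElem?_cons] using hi.2.1
    · have : i + 2 + 2 = (i+2) + 2 := by omega
      rw [this]; simpa [List.getElem?_cons] using hi.2.2
  · intro h i hi
    match i with
    | 0 => simp at hi
    | 1 => simp at hi
    | (i+2) =>
      refine h i ⟨?_, ?_, ?_⟩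
      · simpa [List.getElem?_cons] using hi.1
      · simpa [List.getElem?_cons, show i+2+1 = (i+1)+2 by omega] using hi.2.1
      · simpa [List.getElem?_cons, show i+2+2 = (i+2)+2 by omega] using hi.2.2

lemma hgt_cons_cons (l : List Bool) : hgt (true :: false :: l) = hgt l := by
  simp [hgt, List.count_cons]

lemma heightAt_cons_cons (r : List Bool) (k : ℕ) :
    heightAt (true :: false :: r) (k+2) = heightAt r k := by
  rw [heightAt_eq, heightAt_eq]
  have : List.take (k+2) (true::false::r) = true::false::r.take k := by simp
  rw [this, hgt_cons_cons]

lemma dyck_cons_cons (r : List Bool) : IsDyck (true :: false :: r) ↔ IsDyck r := by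
  constructor
  · intro ⟨h1, h2⟩
    refine ⟨fun k => by rw [← heightAt_cons_cons]; exact h1 (k+2), ?_⟩
    have : (true::false::r).length = r.length + 2 := by simp
    rw [this, heightAt_cons_cons] at h2
    exact h2
  · intro ⟨h1, h2⟩
    constructor
    · intro k
      match k with
      | 0 => rw [heightAt_zero]
      | 1 => simp [heightAt_eq, hgt]
      | (k+2) => rw [heightAt_cons_cons]; exact h1 k
    · have : (true::false::r).length = r.length + 2 := by simp
      rw [this, heightAt_cons_cons]
      exact h2

lemma avoid_glue (t r : List Bool) :
    Avoid (true::true::false::(t ++ false :: r)) ↔ Avoid t ∧ Avoid r := by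
  set q := t ++ false :: r with hq
  constructor
  · intro h
    constructor
    · intro i hi
      have hlen : i + 2 < t.length := by
        by_contra hc
        rw [List.getElem?_eq_none (show t.length ≤ i+2 by omega)] at hi
        exact absurd hi.2.2 (by simp)
      refine h (i+3) ⟨?_, ?_, ?_⟩
      · rw [cons3_get, q_get_left t r i (by omega)]; exact hi.1
      · rw [show i+3+1 = (i+1)+3 by omega, cons3_get, q_get_left t r _ (by omega)]; exact hi.2.1
      · rw [show i+3+2 = (i+2)+3 by omega, cons3_get, q_get_left t r _ (by omega)]; exact hi.2.2
    · intro i hi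
      refine h (t.length + 4 + i) ⟨?_, ?_, ?_⟩
      · rw [show t.length+4+i = (t.length+1+i)+3 by omega, cons3_get, q_get_right]; exact hi.1
      · rw [show t.length+4+i+1 = (t.length+1+(i+1))+3 by omega, cons3_get, q_get_right]
        exact hi.2.1
      · rw [show t.length+4+i+2 = (t.length+1+(i+2))+3 by omega, cons3_get, q_get_right]
        exact hi.2.2
  · rintro ⟨ht, hr⟩ i hi
    match i with
    | 0 => simp at hi
    | 1 => simp at hi
    | 2 => simp at hi
    | (i+3) =>
      rw [cons3_get] at hi
      rw [show i+3+1 = (i+1)+3 by omega, cons3_get] at hi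
      rw [show i+3+2 = (i+2)+3 by omega, cons3_get] at hi
      -- none of i, i+1, i+2 is t.length
      have hne : ∀ j, q[j]? = some true → j ≠ t.length := by
        intro j hj hje
        rw [hje, q_get_mid] at hj
        exact Bool.noConfusion (Option.some.injEq _ _ ▸ hj : false = true)
      have h0 := hne i hi.1
      have h1 := hne (i+1) hi.2.1
      have h2 := hne (i+2) hi.2.2
      rcases lt_or_ge (i+2) t.length with hlt | hge
      · refine ht i ⟨?_, ?_, ?_⟩
        · rw [← q_get_left t r i (by omega)]; exact hi.1
        · rw [← q_get_left t r (i+1) (by omega)]; exact hi.2.1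
        · rw [← q_get_left t r (i+2) (by omega)]; exact hi.2.2
      · have hgt' : t.length + 1 ≤ i := by omega
        refine hr (i - t.length - 1) ⟨?_, ?_, ?_⟩
        · rw [← q_get_right t r, show t.length+1+(i-t.length-1) = i by omega]; exact hi.1
        · rw [← q_get_right t r, show t.length+1+(i-t.length-1+1) = i+1 by omega]; exact hi.2.1
        · rw [← q_get_right t r, show t.length+1+(i-t.length-1+2) = i+2 by omega]; exact hi.2.2


lemma heightAt_append (x y : List Bool) (k : ℕ) :
    heightAt (x ++ y) (x.length + k) = hgt x + heightAt y k := by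
  rw [heightAt_eq, List.take_append, hgt_append, heightAt_eq]
  rw [List.take_of_length_le (l := x) (by omega), Nat.add_sub_cancel_left]

lemma heightAt_append_left (x y : List Bool) (k : ℕ) (h : k ≤ x.length) :
    heightAt (x ++ y) k = heightAt x k := by
  rw [heightAt_eq, heightAt_eq, List.take_append_of_le_length h]

lemma hgt_eq_heightAt (l : List Bool) : hgt l = heightAt l l.length := by
  rw [heightAt_eq, List.take_length]

lemma heightAt_glue3 (q : List Bool) (k : ℕ) :
    heightAt (true::true::false::q) (k+3) = 1 + heightAt q k := by
  have h1 : true::true::false::q = [true,true,false] ++ q := rfl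
  have h2 : k + 3 = [true,true,false].length + k := by simp; omega
  rw [h1, h2, heightAt_append]
  have : hgt [true,true,false] = 1 := by decide
  rw [this]

lemma glue_length (t r : List Bool) :
    (true::true::false::(t ++ false :: r)).length = t.length + r.length + 4 := by
  simp; omega

lemma dyck_glue (t r : List Bool) (ht : IsDyck t) (hr : IsDyck r) :
    IsDyck (true::true::false::(t ++ false :: r)) := by
  set q := t ++ false :: r with hqdef
  have hq : q = (t ++ [false]) ++ r := by simp [hqdef]
  have hqlen : q.length = t.length + 1 + r.length := by simp [hqdef]; omega
  have hqk : ∀ k, -1 ≤ heightAt q k := by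
    intro k
    rcases le_or_gt k t.length with hle | hlt
    · rw [hqdef, heightAt_append_left t (false::r) k hle]
      linarith [ht.1 k]
    · rcases le_or_gt k (q.length) with hle2 | hlt2
      · have hk : k = (t ++ [false]).length + (k - t.length - 1) := by simp; omega
        rw [hq, hk, heightAt_append]
        have : hgt (t ++ [false]) = -1 := by
          rw [hgt_append, hgt_eq_heightAt, ht.2]; decide
        rw [this]
        linarith [hr.1 (k - t.length - 1)]
      · rw [heightAt_of_le q k (by omega)]
        have hk : q.length = (t ++ [false]).length + r.length := by simp; omega
        rw [hk, hq, heightAt_append]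
        have : hgt (t ++ [false]) = -1 := by
          rw [hgt_append, hgt_eq_heightAt, ht.2]; decide
        rw [this, ← hgt_eq_heightAt, hgt_eq_heightAt r, hr.2]
        norm_num
  have hqend : heightAt q q.length = -1 := by
    have hk : q.length = (t ++ [false]).length + r.length := by simp [hqdef]; omega
    rw [hk, hq, heightAt_append]
    have : hgt (t ++ [false]) = -1 := by
      rw [hgt_append, hgt_eq_heightAt, ht.2]; decide
    rw [this, ← hgt_eq_heightAt, hgt_eq_heightAt r, hr.2]
    norm_num
  constructor
  · intro k
    match k with
    | 0 => rw [heightAt_zero]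
    | 1 => simp [heightAt_eq, hgt]
    | 2 => simp [heightAt_eq, hgt]
    | (k+3) => rw [heightAt_glue3]; linarith [hqk k]
  · have hl : (true::true::false::q).length = q.length + 3 := by simp
    rw [hl, heightAt_glue3, hqend]
    norm_num

lemma glue_inj_aux (u u' v v' : List Bool) (hu : IsDyck u) (hu' : IsDyck u')
    (heq : u ++ false :: v = u' ++ false :: v') : ¬ u.length < u'.length := by
  intro hlt
  have h1 : (u ++ false :: v).take (u.length + 1) = u ++ [false] := by
    rw [List.take_append]; simp
  have h2 : (u' ++ false :: v').take (u.length + 1) = (u' ++ false :: v').take (u.length+1) := rfl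
  have h3 : hgt (u ++ [false]) = heightAt (u' ++ false :: v') (u.length + 1) := by
    rw [← h1, heightAt_eq, heq]
  have h4 : heightAt (u' ++ false :: v') (u.length + 1) = heightAt u' (u.length + 1) := by
    exact heightAt_append_left u' (false :: v') _ (by omega)
  have h5 : hgt (u ++ [false]) = -1 := by
    rw [hgt_append, hgt_eq_heightAt, hu.2]; decide
  have h6 := hu'.1 (u.length + 1)
  rw [h4, h5] at h3
  omega

lemma glue_inj (t r t' r' : List Bool) (ht : IsDyck t) (ht' : IsDyck t')
    (h : t ++ false :: r = t' ++ false :: r') : t = t' ∧ r = r' := by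
  have hlen : t.length = t'.length := by
    rcases lt_trichotomy t.length t'.length with hlt | heq | hgt'
    · exact absurd hlt (glue_inj_aux t t' r r' ht ht' h)
    · exact heq
    · exact absurd hgt' (glue_inj_aux t' t r' r ht' ht h.symm)
  obtain ⟨h1, h2⟩ := List.append_inj h hlen
  exact ⟨h1, by simpa using h2⟩

lemma decomp (p : List Bool) (hp : IsDyck p) (hlen : 4 ≤ p.length)
    (h0 : p[0]? = some true) (h1 : p[1]? = some true) (hAv : Avoid p) :
    ∃ t r, IsDyck t ∧ IsDyck r ∧ p = true::true::false::(t ++ false :: r) := by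
  classical
  match p, hlen with
  | (a::b::c::q), _ =>
  simp only [List.getElem?_cons_zero, List.getElem?_cons_succ, Option.some.injEq] at h0 h1
  subst h0; subst h1
  have hc : c = false := by
    have h2 := hAv 0
    cases c with
    | false => rfl
    | true => exact absurd ⟨by simp, by simp, by simp⟩ h2
  subst hc
  have hplen : (true::true::false::q).length = q.length + 3 := by simp
  have hq_ge : ∀ k, -1 ≤ heightAt q k := by
    intro k
    have := hp.1 (k+3)
    rw [heightAt_glue3] at this
    linarith
  have hq_end : heightAt q q.length = -1 := by
    have := hp.2
    rw [hplen, heightAt_glue3] at this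
    linarith
  have hex : ∃ j, heightAt q j < 0 := ⟨q.length, by omega⟩
  set j₀ := Nat.find hex with hj₀def
  have hj₀ : heightAt q j₀ < 0 := Nat.find_spec hex
  have hval : heightAt q j₀ = -1 := by have := hq_ge j₀; omega
  have hmin : ∀ j, j < j₀ → 0 ≤ heightAt q j := by
    intro j hj
    have := Nat.find_min hex hj
    omega
  have hj₀pos : 0 < j₀ := by
    rcases Nat.eq_zero_or_pos j₀ with h | h
    · rw [h, heightAt_zero] at hval; omega
    · exact h
  have hj₀le : j₀ ≤ q.length := Nat.find_min' hex (by omega)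
  have hj₀m1 : j₀ - 1 < q.length := by omega
  have hstep := heightAt_succ q (j₀-1) q[j₀-1] (List.getElem?_eq_getElem hj₀m1)
  rw [show j₀ - 1 + 1 = j₀ by omega] at hstep
  have hprev : 0 ≤ heightAt q (j₀ - 1) := hmin _ (by omega)
  have hb : q[j₀-1] = false := by
    cases hb' : q[j₀-1] with
    | true => rw [hb'] at hstep; simp at hstep; omega
    | false => rfl
  rw [hb] at hstep; simp at hstep
  have hprev0 : heightAt q (j₀ - 1) = 0 := by omega
  refine ⟨q.take (j₀ - 1), q.drop j₀, ?_, ?_, ?_⟩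
  · -- IsDyck t
    have htlen : (q.take (j₀-1)).length = j₀ - 1 := by
      rw [List.length_take]; omega
    have hth : ∀ k, k ≤ j₀ - 1 → heightAt (q.take (j₀-1)) k = heightAt q k := by
      intro k hk
      rw [heightAt_eq, heightAt_eq, List.take_take, show k ⊓ (j₀-1) = k by omega]
    constructor
    · intro k
      rcases le_or_gt k (j₀-1) with hle | hlt
      · rw [hth k hle]
        exact hmin k (by omega)
      · rw [heightAt_of_le (q.take (j₀-1)) k (by rw [htlen]; omega), htlen, hth _ le_rfl, hprev0]
    · rw [htlen, hth _ le_rfl, hprev0]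
  · -- IsDyck r
    have hsplit : q = q.take j₀ ++ q.drop j₀ := (List.take_append_drop j₀ q).symm
    have htl : (q.take j₀).length = j₀ := by rw [List.length_take]; omega
    have hkey : ∀ k, heightAt q (j₀ + k) = -1 + heightAt (q.drop j₀) k := by
      intro k
      conv_lhs => rw [hsplit]
      rw [show j₀ + k = (q.take j₀).length + k by rw [htl], heightAt_append]
      have h1 : heightAt (q.take j₀) j₀ = heightAt q j₀ := by
        rw [heightAt_eq, heightAt_eq, List.take_take]
        simp
      have hh : hgt (q.take j₀) = -1 := by
        rw [hgt_eq_heightAt, htl, h1, hval]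
      rw [hh]
    have hrlen : (q.drop j₀).length = q.length - j₀ := by rw [List.length_drop]
    constructor
    · intro k
      have h2 := hq_ge (j₀ + k)
      rw [hkey k] at h2
      omega
    · rw [hrlen]
      have := hkey (q.length - j₀)
      rw [show j₀ + (q.length - j₀) = q.length by omega, hq_end] at this
      omega
  · -- shape
    have hshape : q = q.take (j₀-1) ++ false :: q.drop j₀ := by
      conv_lhs => rw [← List.take_append_drop (j₀ - 1) q]
      congr 1
      rw [List.drop_eq_getElem_cons hj₀m1, hb, show j₀ - 1 + 1 = j₀ by omega]
    rw [← hshape]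

lemma ncard_prod' {α β : Type*} (s : Set α) (t : Set β) :
    (s ×ˢ t).ncard = s.ncard * t.ncard := by
  rw [← Nat.card_coe_set_eq, ← Nat.card_coe_set_eq, ← Nat.card_coe_set_eq,
    Nat.card_congr (Equiv.Set.prod s t), Nat.card_prod]

lemma ncard_biUnion {α : Type*} (s : Finset ℕ) (f : ℕ → Set α)
    (hfin : ∀ i ∈ s, (f i).Finite)
    (hdisj : ∀ i ∈ s, ∀ j ∈ s, i ≠ j → Disjoint (f i) (f j)) :
    (⋃ i ∈ s, f i).ncard = ∑ i ∈ s, (f i).ncard := by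
  classical
  induction s using Finset.induction_on with
  | empty => simp
  | insert a s' ha ih =>
    rw [Finset.set_biUnion_insert, Finset.sum_insert ha,
      Set.ncard_union_eq ?_ (hfin a (Finset.mem_insert_self a s')) ?_,
      ih (fun i hi => hfin i (Finset.mem_insert_of_mem hi))
        (fun i hi j hj hij => hdisj i (Finset.mem_insert_of_mem hi) j (Finset.mem_insert_of_mem hj) hij)]
    · simp only [Set.disjoint_iUnion_right]
      intro i hi
      exact hdisj a (Finset.mem_insert_self a s') i (Finset.mem_insert_of_mem hi)
        (fun h => ha (h ▸ hi))
    · exact Set.Finite.biUnion (s'.finite_toSet) (fun i hi => hfin i (Finset.mem_insert_of_mem hi))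

lemma count_tf (l : List Bool) : l.count true + l.count false = l.length := by
  induction l with
  | nil => rfl
  | cons b l ih => cases b <;> simp [List.count_cons] <;> omega

lemma dyck_len_even (t : List Bool) (ht : IsDyck t) : t.length = 2 * t.count true := by
  have h := ht.2
  rw [← hgt_eq_heightAt] at h
  unfold hgt at h
  have h2 : t.count true = t.count false := by omega
  have h3 := count_tf t
  omega

lemma first_true (p : List Bool) (hp : IsDyck p) (hpos : 0 < p.length) : p[0]? = some true := by
  match p with
  | b :: l =>
    cases b with
    | true => simp
    | false =>
      exfalso
      have h1 := hp.1 1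
      have : heightAt (false :: l) 1 = -1 := by
        rw [heightAt_eq]
        show hgt [false] = -1
        decide
      omega

def S (n : ℕ) : Set (List Bool) := {p | p.length = 2 * n ∧ IsDyck p ∧ Avoid p}

lemma S_finite (n : ℕ) : (S n).Finite :=
  (List.finite_length_eq Bool (2*n)).subset (fun p hp => hp.1)

noncomputable def aN (n : ℕ) : ℕ := (S n).ncard

lemma dyck_nil : IsDyck [] := by
  refine ⟨fun k => ?_, ?_⟩ <;> simp [heightAt_eq, hgt]

lemma aN_zero : aN 0 = 1 := by
  have : S 0 = {[]} := by
    ext p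
    simp only [S, Set.mem_setOf_eq, Set.mem_singleton_iff]
    constructor
    · rintro ⟨h1, -, -⟩
      exact List.length_eq_zero_iff.mp (by omega)
    · rintro rfl
      exact ⟨rfl, dyck_nil, fun i hi => by simp at hi⟩
  rw [aN, this, Set.ncard_singleton]

lemma dyck_tf : IsDyck [true, false] := by
  constructor
  · intro k
    match k with
    | 0 => rw [heightAt_zero]
    | 1 => rw [heightAt_eq]; decide
    | (k+2) =>
      rw [heightAt_of_le _ (k+2) (by simp), heightAt_eq]
      decide
  · rw [heightAt_eq]; decide

lemma aN_one : aN 1 = 1 := by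
  have : S 1 = {[true, false]} := by
    ext p
    simp only [S, Set.mem_setOf_eq, Set.mem_singleton_iff]
    constructor
    · rintro ⟨h1, h2, -⟩
      obtain ⟨x, y, rfl⟩ := List.length_eq_two.mp h1
      have hx : x = true := by
        have := first_true _ h2 (by simp)
        simpa using this
      subst hx
      have hy : y = false := by
        have := h2.2
        cases y with
        | false => rfl
        | true =>
          exfalso
          rw [heightAt_eq] at this
          simp [hgt] at this
      subst hy
      rfl
    · rintro rfl
      refine ⟨rfl, dyck_tf, fun i hi => ?_⟩
      have := hi.2.2
      rw [List.getElem?_eq_none (show (2:ℕ) ≤ i+2 by omega)] at this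
      exact absurd this (by simp)
  rw [aN, this, Set.ncard_singleton]

lemma aN_rec (n : ℕ) :
    aN (n+2) = aN (n+1) + ∑ k ∈ Finset.range (n+1), aN k * aN (n-k) := by
  classical
  set A : Set (List Bool) := {p | p ∈ S (n+2) ∧ p[1]? = some false} with hA
  set B : Set (List Bool) := {p | p ∈ S (n+2) ∧ p[1]? = some true} with hB
  set Bs : ℕ → Set (List Bool) := fun k =>
    (fun tr : List Bool × List Bool => true::true::false::(tr.1 ++ false :: tr.2)) ''
      (S k ×ˢ S (n - k)) with hBs
  have hAeq : A = (fun r => true::false::r) '' S (n+1) := by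
    ext p
    constructor
    · rintro ⟨⟨hl, hd, hav⟩, h1⟩
      have h0 : p[0]? = some true := first_true p hd (by rw [hl]; omega)
      rcases p with _ | ⟨x, _ | ⟨y, r⟩⟩
      · simp at hl
      · simp at hl; omega
      · simp only [List.getElem?_cons_zero, List.getElem?_cons_succ, Option.some.injEq] at h0 h1
        subst h0; subst h1
        refine ⟨r, ⟨?_, (dyck_cons_cons r).mp hd, (avoid_cons_cons r).mp hav⟩, rfl⟩
        have : r.length + 2 = 2 * (n+2) := by simpa using hl
        omega
    · rintro ⟨r, ⟨hl, hd, hav⟩, rfl⟩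
      refine ⟨⟨?_, (dyck_cons_cons r).mpr hd, (avoid_cons_cons r).mpr hav⟩, by simp⟩
      simp only [List.length_cons, hl]
      omega
  have hBeq : B = ⋃ k ∈ Finset.range (n+1), Bs k := by
    ext p
    simp only [Set.mem_iUnion, Finset.mem_range]
    constructor
    · rintro ⟨⟨hl, hd, hav⟩, h1⟩
      have h0 : p[0]? = some true := first_true p hd (by rw [hl]; omega)
      obtain ⟨t, r, hdt, hdr, rfl⟩ := decomp p hd (by rw [hl]; omega) h0 h1 hav
      obtain ⟨havt, havr⟩ := (avoid_glue t r).mp hav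
      rw [glue_length] at hl
      have hte := dyck_len_even t hdt
      refine ⟨t.count true, by omega, (t, r),
        ⟨⟨show t.length = 2 * t.count true by omega, hdt, havt⟩,
         ⟨show r.length = 2 * (n - t.count true) by omega, hdr, havr⟩⟩, rfl⟩
    · rintro ⟨k, hkn, ⟨t, r⟩, hm, rfl⟩
      obtain ⟨⟨htl, htd, hta⟩, ⟨hrl, hrd, hra⟩⟩ := hm
      refine ⟨⟨?_, dyck_glue t r htd hrd, (avoid_glue t r).mpr ⟨hta, hra⟩⟩, by simp⟩
      rw [glue_length]
      omega
  have hS : S (n+2) = A ∪ B := by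
    ext p
    constructor
    · intro hp
      have h0 : 1 < p.length := by have := hp.1; omega
      have h1 : p[1]? = some p[1] := List.getElem?_eq_getElem h0
      cases hb : p[1] with
      | false => left; exact ⟨hp, by rw [h1, hb]⟩
      | true => right; exact ⟨hp, by rw [h1, hb]⟩
    · rintro (⟨hp, -⟩ | ⟨hp, -⟩) <;> exact hp
  have hdisjAB : Disjoint A B := by
    rw [Set.disjoint_left]
    rintro p ⟨-, h1⟩ ⟨-, h2⟩
    rw [h1] at h2
    simp at h2
  have hAfin : A.Finite := (S_finite (n+2)).subset (fun p hp => hp.1)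
  have hBfin : B.Finite := (S_finite (n+2)).subset (fun p hp => hp.1)
  have hBsfin : ∀ k, (Bs k).Finite := fun k => ((S_finite k).prod (S_finite (n-k))).image _
  have hBsdisj : ∀ i ∈ Finset.range (n+1), ∀ j ∈ Finset.range (n+1), i ≠ j →
      Disjoint (Bs i) (Bs j) := by
    intro i _ j _ hij
    rw [Set.disjoint_left]
    rintro p ⟨⟨t, r⟩, hm, rfl⟩ ⟨⟨t', r'⟩, hm', heq⟩
    simp only [List.cons.injEq, true_and] at heq
    obtain ⟨hteq, -⟩ := glue_inj t' r' t r hm'.1.2.1 hm.1.2.1 heq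
    have h1 : t.length = 2 * i := hm.1.1
    have h2 : t'.length = 2 * j := hm'.1.1
    rw [hteq] at h2
    omega
  have hBscard : ∀ k, (Bs k).ncard = aN k * aN (n-k) := by
    intro k
    rw [hBs]
    rw [Set.ncard_image_of_injOn, ncard_prod']
    · rfl
    · rintro ⟨t, r⟩ hm ⟨t', r'⟩ hm' heq
      simp only [List.cons.injEq, true_and] at heq
      obtain ⟨h1, h2⟩ := glue_inj t r t' r' hm.1.2.1 hm'.1.2.1 heq
      simp [h1, h2]
  have hconsinj : Function.Injective (fun r : List Bool => true::false::r) := by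
    intro a b h
    simpa using h
  calc aN (n+2) = (A ∪ B).ncard := by rw [aN, hS]
    _ = A.ncard + B.ncard := Set.ncard_union_eq hdisjAB hAfin hBfin
    _ = aN (n+1) + ∑ k ∈ Finset.range (n+1), aN k * aN (n-k) := by
        rw [hAeq, Set.ncard_image_of_injective _ hconsinj, hBeq,
          ncard_biUnion _ _ (fun i _ => hBsfin i) hBsdisj]
        congr 1
        exact Finset.sum_congr rfl (fun k _ => hBscard k)

end St6

/-- With `a n` the number of Dyck paths of semilength `n` having no up-run of length 3 or
more: `a 0 = 1`, `a 1 = 1`, and `a n = a (n-1) + ∑_{k=0}^{n-2} a k * a (n-2-k)` for `n ≥ 2`;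
equivalently the generating function `P` satisfies `P = 1 + zP + z²P²`. -/
theorem stmt6 :
    let a : ℕ → ℕ := fun n => Set.ncard {p : List Bool | p.length = 2 * n ∧ IsDyck p ∧
      (∀ m : ℕ, 3 ≤ m → ¬ HasUpRun p m)}
    let P := genFun (fun p => ∀ m : ℕ, 3 ≤ m → ¬ HasUpRun p m)
    a 0 = 1 ∧ a 1 = 1 ∧
    (∀ n : ℕ, 2 ≤ n → a n = a (n - 1) + ∑ k ∈ Finset.range (n - 1), a k * a (n - 2 - k)) ∧
    P = 1 + PowerSeries.X * P + PowerSeries.X ^ 2 * P ^ 2 := by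
  intro a P
  have haS : ∀ n, a n = St6.aN n := by
    intro n
    show Set.ncard _ = Set.ncard _
    congr 1
    ext p
    simp only [Set.mem_setOf_eq, St6.S]
    exact and_congr_right fun _ => and_congr_right fun _ => St6.avoid_iff p
  have hrec : ∀ m : ℕ, a (m+2) = a (m+1) + ∑ k ∈ Finset.range (m+1), a k * a (m-k) := by
    intro m
    simp only [haS]
    exact St6.aN_rec m
  have hP : ∀ n, (PowerSeries.coeff n) P = a n := by
    intro n
    show (PowerSeries.coeff n) (genFun _) = _
    rw [genFun, PowerSeries.coeff_mk]
  refine ⟨?_, ?_, ?_, ?_⟩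
  · rw [haS]; exact St6.aN_zero
  · rw [haS]; exact St6.aN_one
  · intro n hn
    obtain ⟨m, rfl⟩ : ∃ m, n = m + 2 := ⟨n - 2, by omega⟩
    exact hrec m
  · ext n
    rw [map_add, map_add, hP]
    match n with
    | 0 =>
      simp only [PowerSeries.coeff_zero_eq_constantCoeff, map_mul, map_pow, map_one,
        PowerSeries.constantCoeff_X, zero_mul, mul_zero, add_zero, zero_pow, ne_eq,
        OfNat.ofNat_ne_zero, not_false_eq_true]
      rw [haS]
      simpa using St6.aN_zero
    | 1 =>
      rw [PowerSeries.coeff_one]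
      rw [show (1:ℕ) = 0 + 1 by rfl, PowerSeries.coeff_succ_X_mul, hP,
        show (0:ℕ) + 1 = 1 by rfl]
      rw [show (PowerSeries.X^2 * P^2 : PowerSeries ℕ) = PowerSeries.X * (PowerSeries.X * P^2)
        by ring, PowerSeries.coeff_succ_X_mul]
      simp only [PowerSeries.coeff_zero_eq_constantCoeff, map_mul, PowerSeries.constantCoeff_X,
        zero_mul, if_neg (one_ne_zero), zero_add, add_zero]
      rw [haS, haS, St6.aN_zero, St6.aN_one]
    | (k+2) =>
      rw [PowerSeries.coeff_one, if_neg (by omega : ¬ k + 2 = 0)]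
      rw [show k + 2 = (k+1) + 1 by rfl, PowerSeries.coeff_succ_X_mul, hP]
      rw [show (PowerSeries.X^2 * P^2 : PowerSeries ℕ) = PowerSeries.X * (PowerSeries.X * P^2)
        by ring, PowerSeries.coeff_succ_X_mul, PowerSeries.coeff_succ_X_mul]
      rw [pow_two, PowerSeries.coeff_mul]
      rw [Finset.Nat.sum_antidiagonal_eq_sum_range_succ_mk]
      simp only [hP]
      rw [zero_add]
      exact hrec k
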